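/- arXiv:2309.15763 — 10 statements merged into one kernel-verified Lean document; each statement's English description precedes it below -/
import Mathlib

section
/- Let CS be an axiomatically appropriate constant specification for JD. For every formula A, if JD_CS ⊢ A then there exists a justification term t such that JD_CS ⊢ t:A. -/
/-- Justification terms: constants, variables, application, sum, bang. -/
inductive Tm : Type
  | const : Nat → Tm
  | var   : Nat → Tm
  | app   : Tm → Tm → Tm
  | sum   : Tm → Tm → Tm
  | bang  : Tm → Tm

/-- Formulas of justification logic. -/
inductive Fm : Type
  | prop : Nat → Fm
  | bot  : Fm
  | imp  : Fm → Fm → Fm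
  | just : Tm → Fm → Fm

/-- ¬A := A → ⊥ -/
def Fm.neg (A : Fm) : Fm := Fm.imp A Fm.bot
/-- ⊤ := ¬⊥ -/
def Fm.top : Fm := Fm.neg Fm.bot
/-- A ∨ B := ¬A → B -/
def Fm.disj (A B : Fm) : Fm := Fm.imp (Fm.neg A) B
/-- A ∧ B := ¬(A → ¬B) -/
def Fm.conj (A B : Fm) : Fm := Fm.neg (Fm.imp A (Fm.neg B))

/-- A classical propositional tautology in this language: true under every
Boolean valuation that respects ⊥ and →, treating `t:F` and atoms as arbitrary atoms. -/
def IsTaut (A : Fm) : Prop :=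
  ∀ v : Fm → Bool,
    v Fm.bot = false →
    (∀ F G : Fm, v (Fm.imp F G) = (!(v F) || v G)) →
    v A = true

/-- !^n t -/
def bangIter : Nat → Tm → Tm
  | 0, t => t
  | n + 1, t => Tm.bang (bangIter n t)

/-- `anFm n c A` is the formula !^n c : !^{n-1} c : ... : !c : c : A. -/
def anFm : Nat → Tm → Fm → Fm
  | 0, c, A => Fm.just c A
  | n + 1, c, A => Fm.just (bangIter (n + 1) c) (anFm n c A)

/-- Axioms of JD: classical tautologies, j+, j, jd. -/
inductive JDAxiom : Fm → Prop
  | cl {A : Fm} : IsTaut A → JDAxiom A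
  | jplus (s t : Tm) (A : Fm) :
      JDAxiom (Fm.imp (Fm.disj (Fm.just s A) (Fm.just t A)) (Fm.just (Tm.sum s t) A))
  | j (s t : Tm) (A B : Fm) :
      JDAxiom (Fm.imp (Fm.just s (Fm.imp A B)) (Fm.imp (Fm.just t A) (Fm.just (Tm.app s t) B)))
  | jd (t : Tm) : JDAxiom (Fm.neg (Fm.just t Fm.bot))

/-- Axioms of JNoC: classical tautologies, j+, j, noc. -/
inductive JNoCAxiom : Fm → Prop
  | cl {A : Fm} : IsTaut A → JNoCAxiom A
  | jplus (s t : Tm) (A : Fm) :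
      JNoCAxiom (Fm.imp (Fm.disj (Fm.just s A) (Fm.just t A)) (Fm.just (Tm.sum s t) A))
  | j (s t : Tm) (A B : Fm) :
      JNoCAxiom (Fm.imp (Fm.just s (Fm.imp A B)) (Fm.imp (Fm.just t A) (Fm.just (Tm.app s t) B)))
  | noc (t : Tm) (A : Fm) :
      JNoCAxiom (Fm.neg (Fm.conj (Fm.just t A) (Fm.just t (Fm.neg A))))

/-- A constant specification for the logic with axioms `Ax`: a set of pairs (c, A)
where c is (the index of) a constant and A is an axiom. -/
def IsConstSpec (Ax : Fm → Prop) (CS : Set (Nat × Fm)) : Prop :=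
  ∀ p ∈ CS, Ax p.2

/-- CS is axiomatically appropriate: every axiom is justified by some constant. -/
def AxAppropriate (Ax : Fm → Prop) (CS : Set (Nat × Fm)) : Prop :=
  ∀ A : Fm, Ax A → ∃ c : Nat, (c, A) ∈ CS

/-- Hilbert-style derivability from axioms `Ax`, modus ponens, and axiom necessitation. -/
inductive Deriv (Ax : Fm → Prop) (CS : Set (Nat × Fm)) : Fm → Prop
  | ax {A : Fm} : Ax A → Deriv Ax CS A
  | mp {A B : Fm} : Deriv Ax CS (Fm.imp A B) → Deriv Ax CS A → Deriv Ax CS B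
  | an {c : Nat} {A : Fm} (n : Nat) : (c, A) ∈ CS → Deriv Ax CS (anFm n (Tm.const c) A)

/-- A subset-model frame: worlds, normal worlds, valuation, evidence function. -/
structure SModel where
  W : Type
  W0 : Set W
  V : W → Fm → Prop
  E : W → Tm → Set W

/-- Truth set [A]. -/
def SModel.ts (M : SModel) (A : Fm) : Set M.W := {w : M.W | M.V w A}

/-- APP_ω(s,t). -/
def SModel.APP (M : SModel) (ω : M.W) (s t : Tm) : Set Fm :=
  {F : Fm | ∃ H : Fm, M.E ω s ⊆ M.ts (Fm.imp H F) ∧ M.E ω t ⊆ M.ts H}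

/-- The conditions common to general, D-arbitrary and NoC CS-subset models. -/
def CoreConds (CS : Set (Nat × Fm)) (M : SModel) : Prop :=
  M.W0.Nonempty ∧
  ∀ ω ∈ M.W0,
    (¬ M.V ω Fm.bot) ∧
    (∀ F G : Fm, M.V ω (Fm.imp F G) ↔ (¬ M.V ω F ∨ M.V ω G)) ∧
    (∀ (t : Tm) (F : Fm), M.V ω (Fm.just t F) ↔ M.E ω t ⊆ M.ts F) ∧
    (∀ s t : Tm, M.E ω (Tm.sum s t) ⊆ M.E ω s ∩ M.E ω t) ∧
    (∀ s t : Tm, M.E ω (Tm.app s t) ⊆ {υ : M.W | ∀ F ∈ M.APP ω s t, υ ∈ M.ts F}) ∧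
    (∀ (c : Nat) (A : Fm), (c, A) ∈ CS →
      M.E ω (Tm.const c) ⊆ M.ts A ∧
      ∀ n : Nat, M.E ω (bangIter (n + 1) (Tm.const c)) ⊆ M.ts (anFm n (Tm.const c) A))

/-- General CS-subset model: every E(ω,t) meets the normal worlds. -/
def IsGeneralModel (CS : Set (Nat × Fm)) (M : SModel) : Prop :=
  CoreConds CS M ∧ ∀ ω ∈ M.W0, ∀ t : Tm, ∃ υ ∈ M.W0, υ ∈ M.E ω t

/-- D-arbitrary CS-subset model: every E(ω,t) meets W_{¬⊥}. -/
def IsDArbModel (CS : Set (Nat × Fm)) (M : SModel) : Prop :=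
  CoreConds CS M ∧ ∀ ω ∈ M.W0, ∀ t : Tm, ∃ υ : M.W, ¬ M.V υ Fm.bot ∧ υ ∈ M.E ω t

/-- NoC CS-subset model: every E(ω,t) meets W_nc. -/
def IsNoCModel (CS : Set (Nat × Fm)) (M : SModel) : Prop :=
  CoreConds CS M ∧ ∀ ω ∈ M.W0, ∀ t : Tm,
    ∃ υ : M.W, (∀ A : Fm, ¬ M.V υ A ∨ ¬ M.V υ (Fm.neg A)) ∧ υ ∈ M.E ω t

def GeneralValid (CS : Set (Nat × Fm)) (F : Fm) : Prop :=
  ∀ M : SModel, IsGeneralModel CS M → ∀ ω ∈ M.W0, M.V ω F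

def DArbValid (CS : Set (Nat × Fm)) (F : Fm) : Prop :=
  ∀ M : SModel, IsDArbModel CS M → ∀ ω ∈ M.W0, M.V ω F

def NoCValid (CS : Set (Nat × Fm)) (F : Fm) : Prop :=
  ∀ M : SModel, IsNoCModel CS M → ∀ ω ∈ M.W0, M.V ω F

/-- Γ is consistent: no finite list of members of Γ lets the logic derive ⊥
(i.e. A₁ → ... → Aₙ → ⊥ is not derivable for A₁,...,Aₙ ∈ Γ). -/
def ConsistentSet (Ax : Fm → Prop) (CS : Set (Nat × Fm)) (Γ : Set Fm) : Prop :=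
  ¬ ∃ L : List Fm, (∀ A ∈ L, A ∈ Γ) ∧ Deriv Ax CS (L.foldr Fm.imp Fm.bot)

/-- Maximal consistent: consistent and every proper superset is inconsistent. -/
def MaxConsistent (Ax : Fm → Prop) (CS : Set (Nat × Fm)) (Γ : Set Fm) : Prop :=
  ConsistentSet Ax CS Γ ∧ ∀ Δ : Set Fm, Γ ⊂ Δ → ¬ ConsistentSet Ax CS Δ

/-- The canonical model: worlds are arbitrary sets of formulas, normal worlds are
the maximal consistent sets, V^C(Γ,F)=1 iff F ∈ Γ, E^C(Γ,t) = {Δ : Δ ⊇ Γ/t}. -/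
def canonicalModel (Ax : Fm → Prop) (CS : Set (Nat × Fm)) : SModel where
  W := Set Fm
  W0 := {Γ : Set Fm | MaxConsistent Ax CS Γ}
  V := fun Γ F => F ∈ Γ
  E := fun Γ t => {Δ : Set Fm | {F : Fm | Fm.just t F ∈ Γ} ⊆ Δ}

/-- For axiomatically appropriate CS, JD_CS enjoys the lifting property:
if JD_CS ⊢ A then JD_CS ⊢ t:A for some term t. -/
theorem stmt_0 (CS : Set (Nat × Fm))
    (hCS : IsConstSpec JDAxiom CS) (happ : AxAppropriate JDAxiom CS)
    (A : Fm) (h : Deriv JDAxiom CS A) :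
    ∃ t : Tm, Deriv JDAxiom CS (Fm.just t A) := by
  induction h with
  | ax hA =>
      obtain ⟨c, hc⟩ := happ _ hA
      exact ⟨Tm.const c, Deriv.an 0 hc⟩
  | mp hAB hA ihAB ihA =>
      obtain ⟨s, hs⟩ := ihAB
      obtain ⟨t, ht⟩ := ihA
      exact ⟨Tm.app s t, Deriv.mp (Deriv.mp (Deriv.ax (JDAxiom.j s t _ _)) hs) ht⟩
  | an n hc =>
      exact ⟨bangIter (n + 1) (Tm.const _), Deriv.an (n + 1) hc⟩
end

section
/- (Soundness of JD_CS for general subset models) Let CS be an arbitrary constant specification for JD. For every formula F, if JD_CS ⊢ F then F is general CS-valid. -/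
/-- Soundness of JD_CS with respect to general CS-subset models, for arbitrary CS. -/
theorem stmt_1 (CS : Set (Nat × Fm)) (hCS : IsConstSpec JDAxiom CS)
    (F : Fm) (h : Deriv JDAxiom CS F) :
    GeneralValid CS F := by
  intro M hM ω hω
  obtain ⟨hcore, hgen⟩ := hM
  induction h with
  | @ax A hA =>
    obtain ⟨hbot, himp, hjust, hsum, happ, hcs2⟩ := hcore.2 ω hω
    have hneg : ∀ A : Fm, M.V ω (Fm.neg A) ↔ ¬ M.V ω A := by
      intro A
      unfold Fm.neg
      rw [himp]
      constructor
      · rintro (h1 | h2)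
        · exact h1
        · exact absurd h2 hbot
      · exact Or.inl
    cases hA with
    | cl ht =>
      classical
      have := ht (fun G => decide (M.V ω G)) (by simp [hbot]) (by
        intro F G
        by_cases hF : M.V ω F <;> by_cases hG : M.V ω G <;>
          simp [hF, hG, himp, hF, hG] <;> tauto)
      simpa using this
    | jplus s t A =>
      rw [himp]
      by_cases hd : M.V ω (Fm.disj (Fm.just s A) (Fm.just t A))
      · right
        unfold Fm.disj at hd
        rw [himp, hneg] at hd
        have hst : M.V ω (Fm.just s A) ∨ M.V ω (Fm.just t A) := by tauto
        rw [hjust]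
        intro υ hυ
        have := hsum s t hυ
        rcases hst with h1 | h1
        · rw [hjust] at h1; exact h1 this.1
        · rw [hjust] at h1; exact h1 this.2
      · exact Or.inl hd
    | j s t A B =>
      rw [himp]
      by_cases h1 : M.V ω (Fm.just s (Fm.imp A B))
      · right
        rw [himp]
        by_cases h2 : M.V ω (Fm.just t A)
        · right
          rw [hjust] at h1 h2 ⊢
          intro υ hυ
          exact happ s t hυ B ⟨A, h1, h2⟩
        · exact Or.inl h2
      · exact Or.inl h1
    | jd t =>
      rw [hneg, hjust]
      intro hsub
      obtain ⟨υ, hυ0, hυ⟩ := hgen ω hω t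
      exact (hcore.2 υ hυ0).1 (hsub hυ)
  | @an c A n hc =>
    obtain ⟨hbot, himp, hjust, hsum, happ, hcs2⟩ := hcore.2 ω hω
    cases n with
    | zero =>
      show M.V ω (Fm.just (Tm.const c) A)
      rw [hjust]
      exact (hcs2 c A hc).1
    | succ m =>
      show M.V ω (Fm.just (bangIter (m+1) (Tm.const c)) (anFm m (Tm.const c) A))
      rw [hjust]
      exact (hcs2 c A hc).2 m
  | @mp A B hAB hA ihAB ihA =>
    obtain ⟨hbot, himp, hjust, hsum, happ, hcs2⟩ := hcore.2 ω hω
    have := ihAB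
    rw [himp] at this
    tauto
end

section
/- (Completeness of JD_CS for general subset models) Let CS be an axiomatically appropriate constant specification for JD. For every formula F, if F is general CS-valid then JD_CS ⊢ F. -/
/-! ### Auxiliary lemmas -/

section Aux

variable {CS : Set (Nat × Fm)}

lemma dtaut {A : Fm} (h : IsTaut A) : Deriv JDAxiom CS A :=
  Deriv.ax (JDAxiom.cl h)

lemma eval_foldr (v : Fm → Bool)
    (himp : ∀ F G : Fm, v (Fm.imp F G) = (!(v F) || v G)) (B : Fm) :
    ∀ L : List Fm,
      (v (L.foldr Fm.imp B) = true ↔ ((∀ A ∈ L, v A = true) → v B = true)) := by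
  intro L
  induction L with
  | nil => simp
  | cons A L ih =>
    simp only [List.foldr_cons, himp, List.mem_cons, Bool.or_eq_true, Bool.not_eq_true']
    constructor
    · rintro (hA | hrest) hall
      · exact absurd (hall A (Or.inl rfl)) (by simp [hA])
      · exact ih.1 hrest (fun X hX => hall X (Or.inr hX))
    · intro h
      cases hA : v A with
      | false => exact Or.inl rfl
      | true =>
        refine Or.inr (ih.2 ?_)
        intro hall
        refine h ?_
        rintro X (rfl | hX)
        · exact hA
        · exact hall X hX

lemma taut_mono (L L' : List Fm) (B : Fm) (h : ∀ A ∈ L, A ∈ L') :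
    IsTaut ((L.foldr Fm.imp B).imp (L'.foldr Fm.imp B)) := by
  intro v hbot himp
  rw [himp]
  cases hL : v (L.foldr Fm.imp B) with
  | false => simp
  | true =>
    simp only [Bool.not_true, Bool.false_or]
    exact (eval_foldr v himp B L').2 fun hall =>
      (eval_foldr v himp B L).1 hL (fun A hA => hall A (h A hA))

lemma taut_cut (L M : List Fm) (B : Fm) :
    IsTaut ((L.foldr Fm.imp B).imp
      ((B.imp (M.foldr Fm.imp Fm.bot)).imp ((L ++ M).foldr Fm.imp Fm.bot))) := by
  intro v hbot himp
  simp only [himp, List.foldr_append]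
  by_cases hR : v (List.foldr Fm.imp (M.foldr Fm.imp Fm.bot) L) = true
  · simp [hR]
  · have h1 : ¬ ((∀ A ∈ L, v A = true) → v (M.foldr Fm.imp Fm.bot) = true) := by
      intro hh; exact hR ((eval_foldr v himp _ L).2 hh)
    push_neg at h1
    obtain ⟨hallL, hM⟩ := h1
    have hM2 : v (M.foldr Fm.imp Fm.bot) = false := Bool.eq_false_iff.mpr hM
    have hR2 : v (List.foldr Fm.imp (M.foldr Fm.imp Fm.bot) L) = false :=
      Bool.eq_false_iff.mpr hR
    cases hP : v (L.foldr Fm.imp B) with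
    | false => simp
    | true =>
      have hB : v B = true := (eval_foldr v himp B L).1 hP hallL
      simp [hB, hM2, hR2]

lemma taut_negintro (A : Fm) (L : List Fm) :
    IsTaut ((A.imp (L.foldr Fm.imp Fm.bot)).imp (L.foldr Fm.imp (Fm.neg A))) := by
  intro v hbot himp
  simp only [Fm.neg, himp]
  cases hA : v A with
  | false =>
    have : v (L.foldr Fm.imp (Fm.imp A Fm.bot)) = true := by
      refine (eval_foldr v himp _ L).2 fun _ => ?_
      rw [himp, hA]; rfl
    simp [this]
  | true =>
    cases hP : v (L.foldr Fm.imp Fm.bot) with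
    | false => simp
    | true =>
      have : v (L.foldr Fm.imp (Fm.imp A Fm.bot)) = true := by
        refine (eval_foldr v himp _ L).2 fun hall => ?_
        have := (eval_foldr v himp Fm.bot L).1 hP hall
        rw [hbot] at this; exact absurd this (by simp)
      simp [this]

lemma taut_id (A : Fm) : IsTaut (A.imp A) := by
  intro v hbot himp
  rw [himp]; cases v A <;> rfl

lemma taut_k (A B : Fm) : IsTaut (B.imp (A.imp B)) := by
  intro v hbot himp
  simp only [himp]; cases v A <;> cases v B <;> rfl

lemma taut_na (A B : Fm) : IsTaut ((Fm.neg A).imp (A.imp B)) := by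
  intro v hbot himp
  simp only [Fm.neg, himp, hbot]; cases v A <;> cases v B <;> rfl

lemma taut_syl (X Y Z : Fm) :
    IsTaut ((X.imp Y).imp ((Y.imp Z).imp (X.imp Z))) := by
  intro v hbot himp
  simp only [himp]; cases v X <;> cases v Y <;> cases v Z <;> rfl

lemma taut_disj_l (X Y : Fm) : IsTaut (X.imp (Fm.disj X Y)) := by
  intro v hbot himp
  simp only [Fm.disj, Fm.neg, himp, hbot]; cases v X <;> cases v Y <;> rfl

lemma taut_disj_r (X Y : Fm) : IsTaut (Y.imp (Fm.disj X Y)) := by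
  intro v hbot himp
  simp only [Fm.disj, Fm.neg, himp, hbot]; cases v X <;> cases v Y <;> rfl

lemma taut_dne (F : Fm) (L : List Fm) (hL : ∀ A ∈ L, A = Fm.neg F) :
    IsTaut ((L.foldr Fm.imp Fm.bot).imp F) := by
  intro v hbot himp
  rw [himp]
  cases hF : v F with
  | true => simp [hF]
  | false =>
    have hP : v (L.foldr Fm.imp Fm.bot) = false := by
      cases h : v (L.foldr Fm.imp Fm.bot) with
      | false => rfl
      | true =>
        have := (eval_foldr v himp Fm.bot L).1 h (fun A hA => by
          rw [hL A hA]
          show v (Fm.imp F Fm.bot) = true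
          rw [himp, hF, hbot]; rfl)
        rw [hbot] at this; exact absurd this (by simp)
    simp [hP]

/-- Extract a derivation from an inconsistent extension. -/
lemma extract_of_inconsistent {Γ : Set Fm} {A : Fm}
    (h : ¬ ConsistentSet JDAxiom CS (insert A Γ)) :
    ∃ L : List Fm, (∀ B ∈ L, B ∈ Γ) ∧
      Deriv JDAxiom CS (A.imp (L.foldr Fm.imp Fm.bot)) := by
  classical
  rw [ConsistentSet, not_not] at h
  obtain ⟨L0, hL0, hd⟩ := h
  have : DecidableEq Fm := Classical.decEq Fm
  refine ⟨L0.filter (fun B => B ≠ A), ?_, ?_⟩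
  · intro B hB
    rw [List.mem_filter] at hB
    rcases hL0 B hB.1 with h1 | h1
    · exact absurd h1 (by simpa using hB.2)
    · exact h1
  · have hmono := taut_mono L0 (A :: L0.filter (fun B => B ≠ A)) Fm.bot (by
      intro B hB
      by_cases hBA : B = A
      · exact hBA ▸ List.mem_cons_self
      · exact List.mem_cons_of_mem _ (List.mem_filter.2 ⟨hB, by simpa using hBA⟩))
    exact Deriv.mp (dtaut hmono) hd

/-- Key lemma: a maximal consistent set contains everything derivable from it. -/
lemma mem_of_derivable {Γ : Set Fm} (hΓ : MaxConsistent JDAxiom CS Γ)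
    {L : List Fm} (hL : ∀ A ∈ L, A ∈ Γ) {B : Fm}
    (hd : Deriv JDAxiom CS (L.foldr Fm.imp B)) : B ∈ Γ := by
  by_contra hB
  have hss : Γ ⊂ insert B Γ := Set.ssubset_insert hB
  obtain ⟨M, hM, hdM⟩ := extract_of_inconsistent (hΓ.2 _ hss)
  have := Deriv.mp (Deriv.mp (dtaut (taut_cut L M B)) hd) hdM
  exact hΓ.1 ⟨L ++ M, by
    intro A hA
    rcases List.mem_append.1 hA with h | h
    · exact hL A h
    · exact hM A h, this⟩

lemma deriv_mem {Γ : Set Fm} (hΓ : MaxConsistent JDAxiom CS Γ) {B : Fm}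
    (hd : Deriv JDAxiom CS B) : B ∈ Γ :=
  mem_of_derivable hΓ (L := []) (by simp) hd

lemma mcs_mp {Γ : Set Fm} (hΓ : MaxConsistent JDAxiom CS Γ) {A B : Fm}
    (h1 : Fm.imp A B ∈ Γ) (h2 : A ∈ Γ) : B ∈ Γ :=
  mem_of_derivable hΓ (L := [Fm.imp A B, A])
    (by
      intro X hX
      simp only [List.mem_cons, List.not_mem_nil, or_false] at hX
      rcases hX with rfl | rfl
      · exact h1
      · exact h2)
    (dtaut (taut_id (A.imp B)))

lemma mcs_neg {Γ : Set Fm} (hΓ : MaxConsistent JDAxiom CS Γ) {A : Fm}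
    (hA : A ∉ Γ) : Fm.neg A ∈ Γ := by
  have hss : Γ ⊂ insert A Γ := Set.ssubset_insert hA
  obtain ⟨M, hM, hdM⟩ := extract_of_inconsistent (hΓ.2 _ hss)
  exact mem_of_derivable hΓ hM (Deriv.mp (dtaut (taut_negintro A M)) hdM)

lemma mcs_not_bot {Γ : Set Fm} (hΓ : MaxConsistent JDAxiom CS Γ) :
    Fm.bot ∉ Γ := by
  intro hb
  exact hΓ.1 ⟨[Fm.bot], by simpa using hb, dtaut (taut_id Fm.bot)⟩

lemma mcs_no_contra {Γ : Set Fm} (hΓ : MaxConsistent JDAxiom CS Γ) {A : Fm}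
    (h1 : A ∈ Γ) (h2 : Fm.neg A ∈ Γ) : False := by
  refine hΓ.1 ⟨[Fm.neg A, A], ?_, dtaut (taut_id (Fm.neg A))⟩
  intro X hX
  simp only [List.mem_cons, List.not_mem_nil, or_false] at hX
  rcases hX with rfl | rfl
  · exact h2
  · exact h1

/-- Internalization (lifting lemma). -/
lemma internalize (happ : AxAppropriate JDAxiom CS) {A : Fm}
    (h : Deriv JDAxiom CS A) : ∃ s : Tm, Deriv JDAxiom CS (Fm.just s A) := by
  induction h with
  | ax hA =>
    obtain ⟨c, hc⟩ := happ _ hA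
    exact ⟨Tm.const c, Deriv.an 0 hc⟩
  | mp h1 h2 ih1 ih2 =>
    obtain ⟨s, hs⟩ := ih1
    obtain ⟨r, hr⟩ := ih2
    exact ⟨Tm.app s r, Deriv.mp (Deriv.mp (Deriv.ax (JDAxiom.j s r _ _)) hs) hr⟩
  | an n hc => exact ⟨_, Deriv.an (n + 1) hc⟩

/-- Lindenbaum lemma. -/
lemma lindenbaum {Γ : Set Fm} (h : ConsistentSet JDAxiom CS Γ) :
    ∃ Δ : Set Fm, Γ ⊆ Δ ∧ MaxConsistent JDAxiom CS Δ := by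
  classical
  set S : Set (Set Fm) := {Δ | Γ ⊆ Δ ∧ ConsistentSet JDAxiom CS Δ} with hS
  have hzorn := zorn_subset_nonempty S ?_ Γ ⟨Set.Subset.refl Γ, h⟩
  · obtain ⟨m, hm, hmax⟩ := hzorn
    refine ⟨m, hm, hmax.1.2, ?_⟩
    intro Δ hΔ hΔc
    have hΔS : Δ ∈ S := ⟨hm.trans hΔ.1, hΔc⟩
    exact hΔ.2 (hmax.2 hΔS hΔ.1)
  · intro c hc hchain hne
    obtain ⟨s0, hs0⟩ := hne
    refine ⟨⋃₀ c, ⟨(hc hs0).1.trans (Set.subset_sUnion_of_mem hs0), ?_⟩,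
      fun s hs => Set.subset_sUnion_of_mem hs⟩
    rintro ⟨L, hL, hd⟩
    have key : ∀ L : List Fm, (∀ A ∈ L, A ∈ ⋃₀ c) → ∃ s ∈ c, ∀ A ∈ L, A ∈ s := by
      intro L
      induction L with
      | nil => exact fun _ => ⟨s0, hs0, by simp⟩
      | cons A L ih =>
        intro hall
        obtain ⟨s, hs, hsL⟩ := ih (fun X hX => hall X (List.mem_cons_of_mem _ hX))
        obtain ⟨s', hs', hA⟩ := hall A (List.mem_cons_self)
        rcases hchain.total hs hs' with hss | hss
        · refine ⟨s', hs', ?_⟩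
          intro X hX
          rcases List.mem_cons.1 hX with rfl | hX
          · exact hA
          · exact hss (hsL X hX)
        · refine ⟨s, hs, ?_⟩
          intro X hX
          rcases List.mem_cons.1 hX with rfl | hX
          · exact hss hA
          · exact hsL X hX
    obtain ⟨s, hs, hsL⟩ := key L hL
    exact (hc hs).2 ⟨L, hsL, hd⟩

/-- The slash set Γ/t is consistent when Γ is maximal consistent. -/
lemma slash_consistent (happ : AxAppropriate JDAxiom CS) {Γ : Set Fm}
    (hΓ : MaxConsistent JDAxiom CS Γ) (t : Tm) :
    ConsistentSet JDAxiom CS {F : Fm | Fm.just t F ∈ Γ} := by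
  rintro ⟨L, hL, hd⟩
  obtain ⟨s, hs⟩ := internalize happ hd
  have step : ∀ (L : List Fm) (B : Fm) (s : Tm),
      Fm.just s (L.foldr Fm.imp B) ∈ Γ → (∀ F ∈ L, Fm.just t F ∈ Γ) →
      ∃ u : Tm, Fm.just u B ∈ Γ := by
    intro L
    induction L with
    | nil => exact fun B s h _ => ⟨s, h⟩
    | cons A L ih =>
      intro B s h hall
      have hj : Fm.just (Tm.app s t) (L.foldr Fm.imp B) ∈ Γ := by
        have hax := deriv_mem hΓ (Deriv.ax (JDAxiom.j s t A (L.foldr Fm.imp B)))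
        exact mcs_mp hΓ (mcs_mp hΓ hax h) (hall A (List.mem_cons_self))
      exact ih B (Tm.app s t) hj (fun F hF => hall F (List.mem_cons_of_mem _ hF))
  obtain ⟨u, hu⟩ := step L Fm.bot s (deriv_mem hΓ hs) hL
  exact mcs_no_contra hΓ hu (deriv_mem hΓ (Deriv.ax (JDAxiom.jd u)))

/-- just-membership characterization in the canonical model. -/
lemma canonical_just {Γ : Set Fm} (hΓ : MaxConsistent JDAxiom CS Γ) (t : Tm) (F : Fm) :
    Fm.just t F ∈ Γ ↔
      (canonicalModel JDAxiom CS).E Γ t ⊆ (canonicalModel JDAxiom CS).ts F := by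
  constructor
  · intro h Δ hΔ
    exact hΔ h
  · intro h
    exact h (show {F : Fm | Fm.just t F ∈ Γ} ⊆ {F : Fm | Fm.just t F ∈ Γ} from
      Set.Subset.refl _)

/-- The canonical model is a general CS-subset model. -/
lemma canonical_general (happ : AxAppropriate JDAxiom CS)
    (hne : ∃ Γ : Set Fm, MaxConsistent JDAxiom CS Γ) :
    IsGeneralModel CS (canonicalModel JDAxiom CS) := by
  constructor
  · constructor
    · obtain ⟨Γ, hΓ⟩ := hne
      exact ⟨Γ, hΓ⟩
    · intro (Γ : Set Fm) hΓ
      refine ⟨mcs_not_bot hΓ, ?_, fun t F => canonical_just hΓ t F, ?_, ?_, ?_⟩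
      · -- implication
        intro F G
        constructor
        · intro hFG
          by_cases hF : F ∈ Γ
          · exact Or.inr (mcs_mp hΓ hFG hF)
          · exact Or.inl hF
        · rintro (hF | hG)
          · have hnF := mcs_neg hΓ hF
            exact mem_of_derivable hΓ (L := [Fm.neg F]) (by simpa using hnF)
              (dtaut (taut_na F G))
          · exact mem_of_derivable hΓ (L := [G]) (by simpa using (show G ∈ Γ from hG))
              (dtaut (taut_k F G))
      · -- sum
        intro s t (Δ : Set Fm) hΔ
        constructor
        · intro A hA
          refine hΔ ?_
          show Fm.just (Tm.sum s t) A ∈ Γ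
          have hax := deriv_mem hΓ (Deriv.ax (JDAxiom.jplus s t A))
          have hdisj : Fm.disj (Fm.just s A) (Fm.just t A) ∈ Γ :=
            mem_of_derivable hΓ (L := [Fm.just s A]) (by simpa using hA)
              (dtaut (taut_disj_l (Fm.just s A) (Fm.just t A)))
          exact mcs_mp hΓ hax hdisj
        · intro A hA
          refine hΔ ?_
          show Fm.just (Tm.sum s t) A ∈ Γ
          have hax := deriv_mem hΓ (Deriv.ax (JDAxiom.jplus s t A))
          have hdisj : Fm.disj (Fm.just s A) (Fm.just t A) ∈ Γ :=
            mem_of_derivable hΓ (L := [Fm.just t A]) (by simpa using hA)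
              (dtaut (taut_disj_r (Fm.just s A) (Fm.just t A)))
          exact mcs_mp hΓ hax hdisj
      · -- application
        intro s t (Δ : Set Fm) hΔ F hF
        obtain ⟨H, hs, ht⟩ := hF
        have hsj : Fm.just s (Fm.imp H F) ∈ Γ := (canonical_just hΓ s _).2 hs
        have htj : Fm.just t H ∈ Γ := (canonical_just hΓ t _).2 ht
        have hax := deriv_mem hΓ (Deriv.ax (JDAxiom.j s t H F))
        have : Fm.just (Tm.app s t) F ∈ Γ := mcs_mp hΓ (mcs_mp hΓ hax hsj) htj
        exact hΔ this
      · -- constant specification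
        intro c A hcA
        constructor
        · intro (Δ : Set Fm) hΔ
          exact hΔ (deriv_mem hΓ (Deriv.an 0 hcA))
        · intro n (Δ : Set Fm) hΔ
          exact hΔ (deriv_mem hΓ (Deriv.an (n + 1) hcA))
  · -- general condition
    intro (Γ : Set Fm) hΓ t
    obtain ⟨Δ, hsub, hΔ⟩ := lindenbaum (slash_consistent happ hΓ t)
    exact ⟨Δ, hΔ, hsub⟩

end Aux

/-- Completeness of JD_CS with respect to general CS-subset models,
for axiomatically appropriate CS. -/
theorem stmt_2 (CS : Set (Nat × Fm))
    (hCS : IsConstSpec JDAxiom CS) (happ : AxAppropriate JDAxiom CS)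
    (F : Fm) (h : GeneralValid CS F) :
    Deriv JDAxiom CS F := by
  by_cases hc : ConsistentSet JDAxiom CS {Fm.neg F}
  · exfalso
    obtain ⟨Γ, hsub, hΓ⟩ := lindenbaum hc
    have hgen := canonical_general happ ⟨Γ, hΓ⟩
    have hF : F ∈ Γ := h (canonicalModel JDAxiom CS) hgen Γ hΓ
    exact mcs_no_contra hΓ hF (hsub rfl)
  · rw [ConsistentSet, not_not] at hc
    obtain ⟨L, hL, hd⟩ := hc
    exact Deriv.mp (dtaut (taut_dne F L (fun A hA => hL A hA))) hd
end

section
/- (Soundness of JD_CS for D-arbitrary subset models) Let CS be an arbitrary constant specification for JD. For every formula F, if JD_CS ⊢ F then F is D-arbitrary CS-valid. -/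
/-- Soundness of JD_CS with respect to D-arbitrary CS-subset models, for arbitrary CS. -/
theorem stmt_3 (CS : Set (Nat × Fm)) (hCS : IsConstSpec JDAxiom CS)
    (F : Fm) (h : Deriv JDAxiom CS F) :
    DArbValid CS F := by
  intro M hM ω hω
  obtain ⟨⟨hW0, hcore⟩, hD⟩ := hM
  obtain ⟨hbot, himp, hjust, hsum, happ, hcs⟩ := hcore ω hω
  induction h with
  | ax hA =>
      cases hA with
      | cl ht =>
          classical
          have hv := ht (fun F => decide (M.V ω F))
            (by simp [hbot])
            (by
              intro F G
              have := himp F G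
              by_cases hF : M.V ω F <;> by_cases hG : M.V ω G <;>
                simp [hF, hG, this])
          simpa using hv
      | jplus s t A =>
          rw [himp]
          by_cases hd : M.V ω (Fm.disj (Fm.just s A) (Fm.just t A))
          · right
            rw [hjust]
            intro υ hυ
            have hυ' := hsum s t hυ
            have hdisj : M.V ω (Fm.just s A) ∨ M.V ω (Fm.just t A) := by
              simp only [Fm.disj, Fm.neg] at hd
              rw [himp] at hd
              rcases hd with hd | hd
              · left
                have h' := (himp _ _).not.mp hd
                tauto
              · right; exact hd
            rcases hdisj with hd | hd
            · exact (hjust s A).mp hd hυ'.1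
            · exact (hjust t A).mp hd hυ'.2
          · left; exact hd
      | j s t A B =>
          rw [himp]
          by_cases hs : M.V ω (Fm.just s (Fm.imp A B))
          · right
            rw [himp]
            by_cases ht : M.V ω (Fm.just t A)
            · right
              rw [hjust]
              intro υ hυ
              rw [hjust] at hs ht
              exact happ s t hυ B ⟨A, hs, ht⟩
            · left; exact ht
          · left; exact hs
      | jd t =>
          rw [Fm.neg, himp]
          left
          rw [hjust]
          intro hsub
          obtain ⟨υ, hυb, hυE⟩ := hD ω hω t
          exact hυb (hsub hυE)
  | mp hAB hA ihAB ihA =>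
      have := (himp _ _).mp ihAB
      tauto
  | an n hc =>
      cases n with
      | zero =>
          exact (hjust _ _).mpr ((hcs _ _ hc).1)
      | succ m =>
          exact (hjust _ _).mpr ((hcs _ _ hc).2 m)
end

section
/- Let CS be an arbitrary constant specification for JD. The canonical model M^C = (W^C, W₀^C, V^C, E^C), where W^C is the power set of the set of all formulas, W₀^C is the set of maximal JD_CS-consistent sets of formulas, V^C(Γ,F) = 1 iff F ∈ Γ, and E^C(Γ,t) = {Δ ∈ W^C : Δ ⊇ Γ/t} with Γ/t = {F : t:F ∈ Γ}, is a D-arbitrary CS-subset model. -/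
/-! ### Auxiliary material for the proof -/

deriving instance DecidableEq for Tm
deriving instance DecidableEq for Fm

namespace CMaux

def impList (L : List Fm) (B : Fm) : Fm := L.foldr Fm.imp B

lemma eval_impList (v : Fm → Bool)
    (himp : ∀ F G : Fm, v (Fm.imp F G) = (!(v F) || v G)) :
    ∀ (L : List Fm) (B : Fm),
      v (impList L B) = true ↔ ((∀ x ∈ L, v x = true) → v B = true)
  | [], B => by simp [impList]
  | A :: L, B => by
    have ih := eval_impList v himp L B
    simp only [impList, List.foldr_cons] at *
    rw [himp]
    cases hA : v A
    · simp [hA]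
    · simp only [Bool.not_true, Bool.false_or, ih, List.mem_cons]
      constructor
      · intro h hall; exact h (fun x hx => hall x (Or.inr hx))
      · intro h hall
        exact h (fun x hx => hx.elim (fun e => e ▸ hA) (hall x))

lemma taut_T1 (M : List Fm) (A : Fm) :
    IsTaut (Fm.imp (impList M Fm.bot)
      (impList (M.filter (fun B => decide (B ≠ A))) (Fm.imp A Fm.bot))) := by
  intro v hbot himp
  rw [himp]
  cases hM : v (impList M Fm.bot)
  · simp
  · have h2 : v (impList (M.filter (fun B => decide (B ≠ A))) (Fm.imp A Fm.bot)) = true := by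
      rw [eval_impList v himp]
      intro hall
      rw [himp, hbot]
      cases hA : v A
      · simp
      · exfalso
        have hallM : ∀ x ∈ M, v x = true := by
          intro x hx
          by_cases hxA : x = A
          · rw [hxA]; exact hA
          · exact hall x (List.mem_filter.2 ⟨hx, by simpa using hxA⟩)
        have := (eval_impList v himp M Fm.bot).1 hM hallM
        rw [hbot] at this; exact Bool.false_ne_true this
    rw [h2]; rfl

lemma taut_T2 (L M : List Fm) (A : Fm) :
    IsTaut (Fm.imp (impList L A) (Fm.imp (impList M (Fm.imp A Fm.bot))
      (impList (L ++ M) Fm.bot))) := by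
  intro v hbot himp
  rw [himp, himp]
  cases hL : v (impList L A)
  · simp
  · cases hM : v (impList M (Fm.imp A Fm.bot))
    · simp
    · have h3 : v (impList (L ++ M) Fm.bot) = true := by
        rw [eval_impList v himp]
        intro hall
        exfalso
        have hA : v A = true :=
          (eval_impList v himp L A).1 hL (fun x hx => hall x (List.mem_append_left _ hx))
        have hAB : v (Fm.imp A Fm.bot) = true :=
          (eval_impList v himp M _).1 hM (fun x hx => hall x (List.mem_append_right _ hx))
        rw [himp, hbot, hA] at hAB
        exact Bool.false_ne_true hAB
      rw [h3]; rfl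

/-- A maximal JD-consistent set contains anything derivable from finitely many members. -/
lemma mcs_thm {CS : Set (Nat × Fm)} {Γ : Set Fm}
    (hΓ : MaxConsistent JDAxiom CS Γ) {L : List Fm} {A : Fm}
    (hL : ∀ B ∈ L, B ∈ Γ) (hd : Deriv JDAxiom CS (impList L A)) : A ∈ Γ := by
  by_contra hA
  have hss : Γ ⊂ insert A Γ := Set.ssubset_insert hA
  have hinc := hΓ.2 _ hss
  rw [ConsistentSet, not_not] at hinc
  obtain ⟨M, hM, hdM⟩ := hinc
  have hdM' : Deriv JDAxiom CS (impList M Fm.bot) := hdM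
  have hd1 : Deriv JDAxiom CS (impList (M.filter (fun B => decide (B ≠ A))) (Fm.imp A Fm.bot)) :=
    Deriv.mp (Deriv.ax (JDAxiom.cl (taut_T1 M A))) hdM'
  have hd2 : Deriv JDAxiom CS (impList (L ++ M.filter (fun B => decide (B ≠ A))) Fm.bot) :=
    Deriv.mp (Deriv.mp (Deriv.ax (JDAxiom.cl (taut_T2 L _ A))) hd) hd1
  apply hΓ.1
  refine ⟨L ++ M.filter (fun B => decide (B ≠ A)), ?_, hd2⟩
  intro B hB
  rcases List.mem_append.1 hB with h | h
  · exact hL B h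
  · obtain ⟨hBM, hne⟩ := List.mem_filter.1 h
    rcases hM B hBM with h' | h'
    · exact absurd h' (by simpa using hne)
    · exact h'

/-- Anything derivable outright is in a maximal consistent set. -/
lemma mcs_deriv {CS : Set (Nat × Fm)} {Γ : Set Fm}
    (hΓ : MaxConsistent JDAxiom CS Γ) {A : Fm}
    (hd : Deriv JDAxiom CS A) : A ∈ Γ :=
  mcs_thm hΓ (L := []) (by simp) hd

/-- Maximal consistent sets are closed under modus ponens. -/
lemma mcs_mp {CS : Set (Nat × Fm)} {Γ : Set Fm}
    (hΓ : MaxConsistent JDAxiom CS Γ) {A B : Fm}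
    (h1 : Fm.imp A B ∈ Γ) (h2 : A ∈ Γ) : B ∈ Γ := by
  refine mcs_thm hΓ (L := [Fm.imp A B, A]) ?_ ?_
  · intro C hC
    rcases List.mem_cons.1 hC with h | h
    · exact h ▸ h1
    · rw [List.mem_singleton] at h; exact h ▸ h2
  · refine Deriv.ax (JDAxiom.cl ?_)
    intro v hbot himp
    show v (Fm.imp (Fm.imp A B) (Fm.imp A B)) = true
    rw [himp]
    cases v (Fm.imp A B) <;> simp

/-- ⊥ is not in a maximal consistent set. -/
lemma mcs_not_bot {CS : Set (Nat × Fm)} {Γ : Set Fm}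
    (hΓ : MaxConsistent JDAxiom CS Γ) : Fm.bot ∉ Γ := by
  intro hb
  apply hΓ.1
  refine ⟨[Fm.bot], by simpa using hb, ?_⟩
  refine Deriv.ax (JDAxiom.cl ?_)
  intro v hbot himp
  show v (Fm.imp Fm.bot Fm.bot) = true
  rw [himp, hbot]; rfl

/-- If A ∉ Γ for maximal consistent Γ, then ¬A ∈ Γ. -/
lemma mcs_neg_of_notMem {CS : Set (Nat × Fm)} {Γ : Set Fm}
    (hΓ : MaxConsistent JDAxiom CS Γ) {A : Fm}
    (hA : A ∉ Γ) : Fm.imp A Fm.bot ∈ Γ := by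
  have hss : Γ ⊂ insert A Γ := Set.ssubset_insert hA
  have hinc := hΓ.2 _ hss
  rw [ConsistentSet, not_not] at hinc
  obtain ⟨M, hM, hdM⟩ := hinc
  have hdM' : Deriv JDAxiom CS (impList M Fm.bot) := hdM
  have hd1 : Deriv JDAxiom CS (impList (M.filter (fun B => decide (B ≠ A))) (Fm.imp A Fm.bot)) :=
    Deriv.mp (Deriv.ax (JDAxiom.cl (taut_T1 M A))) hdM'
  refine mcs_thm hΓ ?_ hd1
  intro B hB
  obtain ⟨hBM, hne⟩ := List.mem_filter.1 hB
  rcases hM B hBM with h' | h'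
  · exact absurd h' (by simpa using hne)
  · exact h'

/-! ### Consistency of JD_CS via a Boolean valuation -/

def bval : Fm → Bool
  | Fm.prop _ => true
  | Fm.bot => false
  | Fm.imp F G => !(bval F) || bval G
  | Fm.just _ F => bval F

lemma bval_anFm (n : Nat) (c : Tm) (A : Fm) : bval (anFm n c A) = bval A := by
  induction n with
  | zero => rfl
  | succ n ih => simp [anFm, bval, ih]

lemma bval_axiom {A : Fm} (h : JDAxiom A) : bval A = true := by
  cases h with
  | cl h => exact h bval rfl (fun F G => rfl)
  | jplus s t A =>
    show (!(bval (Fm.disj (Fm.just s A) (Fm.just t A))) || bval (Fm.just (Tm.sum s t) A)) = true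
    show (!(!(!(bval A) || bval Fm.bot) || bval A) || bval A) = true
    cases bval A <;> rfl
  | j s t A B =>
    simp only [bval]
    cases bval A <;> cases bval B <;> simp
  | jd t =>
    show (!(bval Fm.bot) || bval Fm.bot) = true
    rfl

lemma bval_deriv {CS : Set (Nat × Fm)} (hCS : IsConstSpec JDAxiom CS) {A : Fm}
    (h : Deriv JDAxiom CS A) : bval A = true := by
  induction h with
  | ax h => exact bval_axiom h
  | mp h1 h2 ih1 ih2 =>
    have : (!(bval _) || bval _) = true := ih1
    rw [ih2] at this
    simpa using this
  | an n hc =>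
    rw [bval_anFm]
    exact bval_axiom (hCS _ hc)

lemma empty_consistent {CS : Set (Nat × Fm)} (hCS : IsConstSpec JDAxiom CS) :
    ConsistentSet JDAxiom CS (∅ : Set Fm) := by
  rintro ⟨L, hL, hd⟩
  have hLnil : L = [] := by
    cases L with
    | nil => rfl
    | cons A L => exact absurd (hL A (by simp)) (Set.notMem_empty A)
  rw [hLnil] at hd
  have := bval_deriv hCS hd
  simp [bval] at this

/-! ### Lindenbaum -/

lemma chain_list {c : Set (Set Fm)} (hc : IsChain (· ⊆ ·) c) (hne : c.Nonempty) :
    ∀ L : List Fm, (∀ A ∈ L, A ∈ ⋃₀ c) → ∃ Γ ∈ c, ∀ A ∈ L, A ∈ Γ := by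
  intro L
  induction L with
  | nil =>
    intro _
    obtain ⟨Γ, hΓ⟩ := hne
    exact ⟨Γ, hΓ, by simp⟩
  | cons A L ih =>
    intro hall
    obtain ⟨Γ, hΓc, hΓ⟩ := ih (fun B hB => hall B (by simp [hB]))
    obtain ⟨Δ, hΔc, hAΔ⟩ := hall A (by simp)
    rcases hc.total hΓc hΔc with h | h
    · exact ⟨Δ, hΔc, fun B hB => by
        rcases List.mem_cons.1 hB with h' | h'
        · exact h' ▸ hAΔ
        · exact h (hΓ B h')⟩
    · exact ⟨Γ, hΓc, fun B hB => by
        rcases List.mem_cons.1 hB with h' | h'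
        · exact h' ▸ hAΔ |> h
        · exact hΓ B h'⟩

lemma exists_mcs {CS : Set (Nat × Fm)} (hCS : IsConstSpec JDAxiom CS) :
    ∃ Γ : Set Fm, MaxConsistent JDAxiom CS Γ := by
  obtain ⟨m, _, hm⟩ := zorn_subset_nonempty {Γ : Set Fm | ConsistentSet JDAxiom CS Γ}
    (fun c hcS hchain hcne => by
      refine ⟨⋃₀ c, ?_, fun s hs => Set.subset_sUnion_of_mem hs⟩
      rintro ⟨L, hL, hd⟩
      obtain ⟨Γ, hΓc, hΓ⟩ := chain_list hchain hcne L hL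
      exact hcS hΓc ⟨L, hΓ, hd⟩)
    ∅ (empty_consistent hCS)
  refine ⟨m, hm.1, ?_⟩
  intro Δ hΔ hΔcons
  exact hΔ.2 (hm.2 hΔcons hΔ.1)

lemma taut_K (G F : Fm) : IsTaut (Fm.imp G (Fm.imp F G)) := by
  intro v hbot himp
  rw [himp, himp]
  cases v G <;> cases v F <;> simp

lemma taut_efq (F G : Fm) : IsTaut (Fm.imp (Fm.imp F Fm.bot) (Fm.imp F G)) := by
  intro v hbot himp
  rw [himp, himp, himp, hbot]
  cases v F <;> cases v G <;> simp

lemma taut_orl (A B : Fm) : IsTaut (Fm.imp A (Fm.disj A B)) := by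
  intro v hbot himp
  unfold Fm.disj Fm.neg
  rw [himp, himp, himp, hbot]
  cases v A <;> cases v B <;> simp

lemma taut_orr (A B : Fm) : IsTaut (Fm.imp B (Fm.disj A B)) := by
  intro v hbot himp
  unfold Fm.disj Fm.neg
  rw [himp, himp, himp, hbot]
  cases v A <;> cases v B <;> simp

end CMaux

/-- The canonical model for JD_CS is a D-arbitrary CS-subset model, for arbitrary CS. -/
theorem stmt_5 (CS : Set (Nat × Fm)) (hCS : IsConstSpec JDAxiom CS) :
    IsDArbModel CS (canonicalModel JDAxiom CS) := by
  show IsDArbModel CS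
    ⟨Set Fm, {Γ : Set Fm | MaxConsistent JDAxiom CS Γ}, fun Γ F => F ∈ Γ,
      fun Γ t => {Δ : Set Fm | {F : Fm | Fm.just t F ∈ Γ} ⊆ Δ}⟩
  have jdmem : ∀ {Γ : Set Fm}, MaxConsistent JDAxiom CS Γ → ∀ t : Tm, Fm.just t Fm.bot ∉ Γ := by
    intro Γ hΓ t h
    have hneg : Fm.imp (Fm.just t Fm.bot) Fm.bot ∈ Γ :=
      CMaux.mcs_deriv hΓ (Deriv.ax (JDAxiom.jd t))
    exact CMaux.mcs_not_bot hΓ (CMaux.mcs_mp hΓ hneg h)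
  constructor
  · constructor
    · exact CMaux.exists_mcs hCS
    · intro Γ hΓ
      have hΓ' : MaxConsistent JDAxiom CS Γ := hΓ
      refine ⟨CMaux.mcs_not_bot hΓ', ?_, ?_, ?_, ?_, ?_⟩
      · intro F G
        show Fm.imp F G ∈ Γ ↔ (F ∉ Γ ∨ G ∈ Γ)
        constructor
        · intro h
          by_cases hF : F ∈ Γ
          · exact Or.inr (CMaux.mcs_mp hΓ' h hF)
          · exact Or.inl hF
        · rintro (h | h)
          · exact CMaux.mcs_mp hΓ'
              (CMaux.mcs_deriv hΓ' (Deriv.ax (JDAxiom.cl (CMaux.taut_efq F G))))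
              (CMaux.mcs_neg_of_notMem hΓ' h)
          · exact CMaux.mcs_mp hΓ'
              (CMaux.mcs_deriv hΓ' (Deriv.ax (JDAxiom.cl (CMaux.taut_K G F)))) h
      · intro t F
        constructor
        · intro h Δ hΔ
          exact hΔ h
        · intro h
          exact h (show {F : Fm | Fm.just t F ∈ Γ} ⊆ {G : Fm | Fm.just t G ∈ Γ}
            from fun G hG => hG)
      · intro s t Δ hΔ
        constructor
        · intro F hF
          apply hΔ
          show Fm.just (Tm.sum s t) F ∈ Γ
          refine CMaux.mcs_mp hΓ'
            (CMaux.mcs_deriv hΓ' (Deriv.ax (JDAxiom.jplus s t F))) ?_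
          exact CMaux.mcs_mp hΓ'
            (CMaux.mcs_deriv hΓ' (Deriv.ax (JDAxiom.cl
              (CMaux.taut_orl (Fm.just s F) (Fm.just t F))))) hF
        · intro F hF
          apply hΔ
          show Fm.just (Tm.sum s t) F ∈ Γ
          refine CMaux.mcs_mp hΓ'
            (CMaux.mcs_deriv hΓ' (Deriv.ax (JDAxiom.jplus s t F))) ?_
          exact CMaux.mcs_mp hΓ'
            (CMaux.mcs_deriv hΓ' (Deriv.ax (JDAxiom.cl
              (CMaux.taut_orr (Fm.just s F) (Fm.just t F))))) hF
      · intro s t Δ hΔ F hF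
        obtain ⟨H, h1, h2⟩ := hF
        have hs : Fm.just s (Fm.imp H F) ∈ Γ :=
          h1 (show {F : Fm | Fm.just s F ∈ Γ} ⊆ {G : Fm | Fm.just s G ∈ Γ}
            from fun G hG => hG)
        have ht : Fm.just t H ∈ Γ :=
          h2 (show {F : Fm | Fm.just t F ∈ Γ} ⊆ {G : Fm | Fm.just t G ∈ Γ}
            from fun G hG => hG)
        have happ : Fm.just (Tm.app s t) F ∈ Γ :=
          CMaux.mcs_mp hΓ' (CMaux.mcs_mp hΓ'
            (CMaux.mcs_deriv hΓ' (Deriv.ax (JDAxiom.j s t H F))) hs) ht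
        exact hΔ happ
      · intro c A hcA
        constructor
        · intro Δ hΔ
          exact hΔ (CMaux.mcs_deriv hΓ' (Deriv.an 0 hcA))
        · intro n Δ hΔ
          exact hΔ (CMaux.mcs_deriv hΓ' (Deriv.an (n + 1) hcA))
  · intro Γ hΓ t
    have hΓ' : MaxConsistent JDAxiom CS Γ := hΓ
    exact ⟨{F : Fm | Fm.just t F ∈ Γ}, jdmem hΓ' t, fun F hF => hF⟩
end

section
/- (Soundness of JNoC_CS for NoC subset models) Let CS be an arbitrary constant specification for JNoC. For every formula F, if JNoC_CS ⊢ F then F is NoC CS-valid. -/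
/-- Soundness of JNoC_CS with respect to NoC CS-subset models, for arbitrary CS. -/
theorem stmt_6 (CS : Set (Nat × Fm)) (hCS : IsConstSpec JNoCAxiom CS)
    (F : Fm) (h : Deriv JNoCAxiom CS F) :
    NoCValid CS F := by
  induction h with
  | @ax A hA =>
    intro M hM ω hω
    obtain ⟨⟨_, hcore⟩, hnc⟩ := hM
    obtain ⟨hbot, himp, hjust, hsum, happ, hcs⟩ := hcore ω hω
    have hneg : ∀ X, M.V ω (Fm.neg X) ↔ ¬ M.V ω X := by
      intro X
      rw [Fm.neg, himp]
      constructor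
      · rintro (h | h)
        · exact h
        · exact absurd h hbot
      · exact Or.inl
    cases hA with
    | cl ht =>
      classical
      have hv := ht (fun A => decide (M.V ω A))
        (by simpa using decide_eq_false hbot)
        (by
          intro F G
          by_cases hF : M.V ω F <;> by_cases hG : M.V ω G <;>
            simp [himp F G, hF, hG])
      simpa using hv
    | jplus s t A =>
      rw [himp]
      by_cases hd : M.V ω (Fm.disj (Fm.just s A) (Fm.just t A))
      · right
        rw [hjust]
        simp only [Fm.disj] at hd
        rw [himp, hneg] at hd
        intro υ hυ
        have hυ' := hsum s t hυ
        rcases hd with hd | hd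
        · rw [not_not, hjust] at hd
          exact hd hυ'.1
        · rw [hjust] at hd
          exact hd hυ'.2
      · exact Or.inl hd
    | j s t A B =>
      rw [himp]
      by_cases h1 : M.V ω (Fm.just s (Fm.imp A B))
      · right
        rw [himp]
        by_cases h2 : M.V ω (Fm.just t A)
        · right
          rw [hjust] at h1 h2 ⊢
          intro υ hυ
          exact happ s t hυ B ⟨A, h1, h2⟩
        · exact Or.inl h2
      · exact Or.inl h1
    | noc t A =>
      rw [hneg]
      intro hc
      simp only [Fm.conj] at hc
      rw [hneg, himp, hneg, not_or, not_not, not_not] at hc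
      obtain ⟨h1, h2⟩ := hc
      rw [hjust] at h1 h2
      obtain ⟨υ, hυnc, hυ⟩ := hnc ω hω t
      rcases hυnc A with h | h
      · exact h (h1 hυ)
      · exact h (h2 hυ)
  | mp _ _ ih1 ih2 =>
    intro M hM ω hω
    have hM' := hM
    obtain ⟨⟨_, hcore⟩, _⟩ := hM'
    obtain ⟨hbot, himp, _⟩ := hcore ω hω
    have h1 := ih1 M hM ω hω
    have h2 := ih2 M hM ω hω
    rw [himp] at h1
    rcases h1 with h1 | h1
    · exact absurd h2 h1
    · exact h1
  | @an c A n hc =>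
    intro M hM ω hω
    obtain ⟨⟨_, hcore⟩, _⟩ := hM
    obtain ⟨hbot, himp, hjust, hsum, happ, hcs⟩ := hcore ω hω
    cases n with
    | zero =>
      rw [anFm, hjust]
      exact (hcs c A hc).1
    | succ m =>
      rw [anFm, hjust]
      exact (hcs c A hc).2 m
end

section
/- Let CS be an arbitrary constant specification for JD. Then JD_CS proves every instance of the axiom schema noc, i.e. JD_CS ⊢ ¬(t:A ∧ t:¬A) for every justification term t and every formula A. -/
/-- For arbitrary CS, JD_CS proves every instance of the schema noc: ¬(t:A ∧ t:¬A). -/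
theorem stmt_10 (CS : Set (Nat × Fm)) (hCS : IsConstSpec JDAxiom CS)
    (t : Tm) (A : Fm) :
    Deriv JDAxiom CS (Fm.neg (Fm.conj (Fm.just t A) (Fm.just t (Fm.neg A)))) := by
  have hj : Deriv JDAxiom CS
      (Fm.imp (Fm.just t (Fm.imp A Fm.bot))
        (Fm.imp (Fm.just t A) (Fm.just (Tm.app t t) Fm.bot))) :=
    Deriv.ax (JDAxiom.j t t A Fm.bot)
  have hd : Deriv JDAxiom CS (Fm.neg (Fm.just (Tm.app t t) Fm.bot)) :=
    Deriv.ax (JDAxiom.jd (Tm.app t t))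
  have htaut : IsTaut
      (Fm.imp (Fm.imp (Fm.just t (Fm.imp A Fm.bot))
          (Fm.imp (Fm.just t A) (Fm.just (Tm.app t t) Fm.bot)))
        (Fm.imp (Fm.neg (Fm.just (Tm.app t t) Fm.bot))
          (Fm.neg (Fm.conj (Fm.just t A) (Fm.just t (Fm.neg A)))))) := by
    intro v hb hi
    simp only [Fm.conj, Fm.neg, hi, hb]
    cases v (Fm.just t A) <;> cases v (Fm.just t (Fm.imp A Fm.bot)) <;>
      cases v (Fm.just (Tm.app t t) Fm.bot) <;> simp
  exact Deriv.mp (Deriv.mp (Deriv.ax (JDAxiom.cl htaut)) hj) hd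
end

section
/- Let CS be an axiomatically appropriate constant specification for JNoC. Then JNoC_CS proves ¬(t:⊥) for every justification term t. -/
/-- For axiomatically appropriate CS, JNoC_CS proves ¬(t:⊥) for every term t. -/
theorem stmt_12 (CS : Set (Nat × Fm))
    (hCS : IsConstSpec JNoCAxiom CS) (happ : AxAppropriate JNoCAxiom CS)
    (t : Tm) :
    Deriv JNoCAxiom CS (Fm.neg (Fm.just t Fm.bot)) := by
  have htop : JNoCAxiom Fm.top := by
    apply JNoCAxiom.cl
    intro v hbot himp
    simp [Fm.top, Fm.neg, himp, hbot]
  obtain ⟨c, hc⟩ := happ _ htop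
  have h1 : Deriv JNoCAxiom CS (Fm.just (Tm.const c) Fm.top) := Deriv.an 0 hc
  have h2 : Deriv JNoCAxiom CS
      (Fm.imp (Fm.disj (Fm.just (Tm.const c) Fm.top) (Fm.just t Fm.top))
        (Fm.just (Tm.sum (Tm.const c) t) Fm.top)) :=
    Deriv.ax (JNoCAxiom.jplus _ _ _)
  have h3 : Deriv JNoCAxiom CS
      (Fm.imp (Fm.disj (Fm.just (Tm.const c) Fm.bot) (Fm.just t Fm.bot))
        (Fm.just (Tm.sum (Tm.const c) t) Fm.bot)) :=
    Deriv.ax (JNoCAxiom.jplus _ _ _)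
  have h4 : Deriv JNoCAxiom CS
      (Fm.neg (Fm.conj (Fm.just (Tm.sum (Tm.const c) t) Fm.bot)
        (Fm.just (Tm.sum (Tm.const c) t) (Fm.neg Fm.bot)))) :=
    Deriv.ax (JNoCAxiom.noc _ _)
  -- the propositional glue as one tautology
  have htaut : Deriv JNoCAxiom CS
      (Fm.imp (Fm.just (Tm.const c) Fm.top)
        (Fm.imp (Fm.imp (Fm.disj (Fm.just (Tm.const c) Fm.top) (Fm.just t Fm.top))
            (Fm.just (Tm.sum (Tm.const c) t) Fm.top))
          (Fm.imp (Fm.imp (Fm.disj (Fm.just (Tm.const c) Fm.bot) (Fm.just t Fm.bot))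
              (Fm.just (Tm.sum (Tm.const c) t) Fm.bot))
            (Fm.imp (Fm.neg (Fm.conj (Fm.just (Tm.sum (Tm.const c) t) Fm.bot)
                (Fm.just (Tm.sum (Tm.const c) t) (Fm.neg Fm.bot))))
              (Fm.neg (Fm.just t Fm.bot)))))) := by
    apply Deriv.ax
    apply JNoCAxiom.cl
    intro v hbot himp
    simp only [Fm.top, Fm.neg, Fm.disj, Fm.conj, himp, hbot]
    cases v (Fm.just (Tm.const c) (Fm.imp Fm.bot Fm.bot)) <;>
      cases v (Fm.just t (Fm.imp Fm.bot Fm.bot)) <;>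
      cases v (Fm.just (Tm.sum (Tm.const c) t) (Fm.imp Fm.bot Fm.bot)) <;>
      cases v (Fm.just (Tm.const c) Fm.bot) <;>
      cases v (Fm.just t Fm.bot) <;>
      cases v (Fm.just (Tm.sum (Tm.const c) t) Fm.bot) <;> simp
  exact (((htaut.mp h1).mp h2).mp h3).mp h4
end

section
/- For the empty constant specification CS = ∅, there exists a NoC CS-subset model M = (W, W₀, V, E), a world ω ∈ W₀, and a term t such that M, ω ⊩ t:⊥. Concretely, one may take W = {ω, ν}, W₀ = {ω}, V(ν,⊥) = 1 and V(ν,F) = 0 for all other formulas F (with V(ω,·) any valuation making ω a normal world), and E(υ,t) = {ν} for all worlds υ and all terms t. -/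
/-- Valuation at the normal world ω. -/
def vt : Fm → Prop
  | Fm.prop _ => False
  | Fm.bot => False
  | Fm.imp F G => ¬ vt F ∨ vt G
  | Fm.just _ F => F = Fm.bot

/-- The two-world model: ω = true (normal), ν = false (inconsistent but nc). -/
def badModel : SModel where
  W := Bool
  W0 := {true}
  V := fun w F => if w then vt F else F = Fm.bot
  E := fun _ _ => {false}

/-- For the empty constant specification there is a NoC CS-subset model with a normal
world ω and a term t such that M, ω ⊩ t:⊥. -/
theorem stmt_13 :
    ∃ M : SModel, IsNoCModel (∅ : Set (Nat × Fm)) M ∧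
      ∃ ω ∈ M.W0, ∃ t : Tm, M.V ω (Fm.just t Fm.bot) := by
  refine ⟨badModel, ⟨⟨⟨true, rfl⟩, ?_⟩, ?_⟩, true, rfl, Tm.var 0, ?_⟩
  · rintro ω (rfl : ω = true)
    refine ⟨?_, ?_, ?_, ?_, ?_, ?_⟩
    · simp [badModel, vt]
    · intro F G; simp [badModel, vt]
    · intro t F
      constructor
      · intro h υ hυ
        rcases hυ with rfl
        exact h
      · intro h
        have := h (show (false : Bool) ∈ ({false} : Set Bool) from rfl)
        exact this
    · intro s t υ hυ; exact ⟨hυ, hυ⟩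
    · intro s t υ hυ F hF
      rcases hF with ⟨H, hs, _⟩
      have := hs (show (false : Bool) ∈ ({false} : Set Bool) from rfl)
      simp [badModel, SModel.ts] at this
      exact absurd (show false = true ∧ vt (H.imp F) from this).1 Bool.false_ne_true
    · intro c A hc; exact absurd hc (Set.notMem_empty _)
  · rintro ω (rfl : ω = true) t
    refine ⟨false, ?_, rfl⟩
    intro A
    right
    simp [badModel, Fm.neg]
  · show badModel.V true (Fm.just (Tm.var 0) Fm.bot)
    simp [badModel, vt]
end

section
/- Let CS = ∅ be the empty constant specification for JNoC. Then for every justification term t, JNoC_CS does not prove ¬(t:⊥). In particular, the axiom schema jd is not derivable in JNoC with an arbitrary constant specification. -/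
def isBotFm : Fm → Bool
  | Fm.bot => true
  | _ => false

def cval : Fm → Bool
  | Fm.prop _ => true
  | Fm.bot => false
  | Fm.imp F G => !(cval F) || cval G
  | Fm.just _ F => isBotFm F

lemma cval_deriv {A : Fm} (h : Deriv JNoCAxiom (∅ : Set (Nat × Fm)) A) :
    cval A = true := by
  induction h with
  | ax hA =>
    cases hA with
    | cl ht => exact ht cval rfl (fun F G => rfl)
    | jplus s t A =>
      simp only [Fm.disj, Fm.neg, cval]
      cases isBotFm A <;> decide
    | j s t A B =>
      have : isBotFm (Fm.imp A B) = false := rfl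
      simp only [cval, this]
      cases isBotFm A <;> cases isBotFm B <;> decide
    | noc t A =>
      have : isBotFm (Fm.imp A Fm.bot) = false := rfl
      simp only [Fm.conj, Fm.neg, cval, this]
      cases isBotFm A <;> decide
  | mp _ _ ih1 ih2 =>
    simp only [cval, ih2, Bool.not_true, Bool.false_or] at ih1
    exact ih1
  | an n hc => exact absurd hc (Set.notMem_empty _)

/-- For the empty constant specification, JNoC_CS does not prove ¬(t:⊥) for any term t. -/
theorem stmt_14 (t : Tm) :
    ¬ Deriv JNoCAxiom (∅ : Set (Nat × Fm)) (Fm.neg (Fm.just t Fm.bot)) := by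
  intro h
  have := cval_deriv h
  simp [Fm.neg, cval, isBotFm] at this
end
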